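/- Let H be a linear forest on h vertices and let G be an H-free graph. Let Z_1, …, Z_k be nonempty finite pairwise disjoint vertex sets of G. If there exist pairwise disjoint, pairwise anticomplete vertex sets D^1, …, D^k such that each G[D^i] is connected and Z_i ⊆ D^i for every i, then there exist such sets A^1, …, A^k (pairwise disjoint, pairwise anticomplete, each G[A^i] connected, Z_i ⊆ A^i) with the additional property that |A^i| ≤ (2h-1)·|Z_i| for every i ∈ {1, …, k}. -/

import Mathlib

/-- A linear forest: an acyclic graph in which every vertex has degree at most 2
(no vertex has three pairwise distinct neighbours). -/
def SimpleGraph.IsLinearForest {V : Type*} (G : SimpleGraph V) : Prop :=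
  G.IsAcyclic ∧ ∀ v a b c : V, G.Adj v a → G.Adj v b → G.Adj v c → (a = b ∨ a = c ∨ b = c)

/-- Two vertex sets are anticomplete if no vertex of one is adjacent to a vertex of
the other. -/
def SimpleGraph.Anticomplete {V : Type*} (G : SimpleGraph V) (A B : Set V) : Prop :=
  ∀ a ∈ A, ∀ b ∈ B, ¬ G.Adj a b

namespace SmallSolAux

open SimpleGraph SimpleGraph.Walk

variable {V : Type*} {G : SimpleGraph V}

lemma getVert_eq_support_getElem {u v : V} (p : G.Walk u v) {i : ℕ} (hi : i ≤ p.length) :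
    p.getVert i = p.support[i]'(by rw [SimpleGraph.Walk.length_support]; omega) := by
  induction p generalizing i with
  | nil =>
    obtain rfl : i = 0 := Nat.le_zero.mp hi
    simp
  | cons h q ih =>
    cases i with
    | zero => simp
    | succ n =>
      rw [Walk.getVert_cons_succ]
      simp only [Walk.support_cons, List.getElem_cons_succ]
      exact ih (by simpa using hi)

lemma getVert_injOn {u v : V} {p : G.Walk u v} (hp : p.IsPath) {i j : ℕ}
    (hi : i ≤ p.length) (hj : j ≤ p.length) (hij : p.getVert i = p.getVert j) : i = j := by
  rw [getVert_eq_support_getElem _ hi, getVert_eq_support_getElem _ hj] at hij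
  exact (List.Nodup.getElem_inj_iff hp.support_nodup).mp hij

lemma getVert_mem_support {u v : V} (p : G.Walk u v) (i : ℕ) : p.getVert i ∈ p.support := by
  rw [Walk.mem_support_iff_exists_getVert]
  rcases le_or_gt i p.length with h | h
  · exact ⟨i, rfl, h⟩
  · exact ⟨p.length, by rw [Walk.getVert_length, Walk.getVert_of_length_le _ h.le], le_rfl⟩

/-- take the first `n` darts of a walk -/
def takeW {u v : V} : (p : G.Walk u v) → (n : ℕ) → G.Walk u (p.getVert n)
  | p, 0 => Walk.nil.copy rfl (p.getVert_zero).symm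
  | .nil, (_+1) => .nil
  | .cons h q, (n+1) => (Walk.cons h (takeW q n)).copy rfl (Walk.getVert_cons_succ q h).symm

lemma length_takeW {u v : V} (p : G.Walk u v) {n : ℕ} (hn : n ≤ p.length) :
    (takeW p n).length = n := by
  induction p generalizing n with
  | nil => obtain rfl : n = 0 := Nat.le_zero.mp hn; simp [takeW]
  | cons h q ih =>
    cases n with
    | zero => simp [takeW]
    | succ m => simp only [takeW, Walk.length_copy, Walk.length_cons]
                rw [ih (by simpa using hn)]

lemma support_takeW_subset {u v : V} (p : G.Walk u v) (n : ℕ) :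
    (takeW p n).support ⊆ p.support := by
  induction p generalizing n with
  | nil => cases n <;> simp [takeW]
  | cons h q ih =>
    cases n with
    | zero => intro x hx; simp [takeW] at hx; simp [hx]
    | succ m =>
      intro x hx
      simp only [takeW, Walk.support_copy, Walk.support_cons, List.mem_cons] at hx
      rcases hx with h1 | hx
      · simp [h1]
      · simp only [Walk.support_cons, List.mem_cons]
        exact Or.inr (ih m hx)

/-- drop the first `n` darts of a walk -/
def dropW {u v : V} : (p : G.Walk u v) → (n : ℕ) → G.Walk (p.getVert n) v
  | p, 0 => p.copy (p.getVert_zero).symm rfl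
  | .nil, (_+1) => .nil
  | .cons h q, (n+1) => (dropW q n).copy (Walk.getVert_cons_succ q h).symm rfl

lemma length_dropW {u v : V} (p : G.Walk u v) (n : ℕ) :
    (dropW p n).length = p.length - n := by
  induction p generalizing n with
  | nil => cases n <;> simp [dropW]
  | cons h q ih =>
    cases n with
    | zero => simp [dropW]
    | succ m => simp only [dropW, Walk.length_copy, Walk.length_cons]
                rw [ih m]; omega

lemma support_dropW_subset {u v : V} (p : G.Walk u v) (n : ℕ) :
    (dropW p n).support ⊆ p.support := by
  induction p generalizing n with
  | nil => cases n
           · simp [dropW]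
           · intro x hx; simpa [dropW] using hx
  | cons h q ih =>
    cases n with
    | zero => simp [dropW]
    | succ m =>
      intro x hx
      simp only [dropW, Walk.support_copy] at hx
      simp only [Walk.support_cons, List.mem_cons]
      exact Or.inr (ih m hx)


/-- reachability via a walk whose support stays inside `A` -/
def ReachIn (G : SimpleGraph V) (A : Set V) (x y : V) : Prop :=
  ∃ w : G.Walk x y, ∀ v ∈ w.support, v ∈ A

lemma ReachIn.mono {A B : Set V} {x y : V} (hAB : A ⊆ B) (h : ReachIn G A x y) :
    ReachIn G B x y := by
  obtain ⟨w, hw⟩ := h; exact ⟨w, fun v hv => hAB (hw v hv)⟩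

lemma ReachIn.symm {A : Set V} {x y : V} (h : ReachIn G A x y) : ReachIn G A y x := by
  obtain ⟨w, hw⟩ := h
  exact ⟨w.reverse, fun v hv => hw v (by simpa [Walk.support_reverse] using hv)⟩

lemma ReachIn.trans {A : Set V} {x y z : V} (h1 : ReachIn G A x y) (h2 : ReachIn G A y z) :
    ReachIn G A x z := by
  obtain ⟨w1, hw1⟩ := h1
  obtain ⟨w2, hw2⟩ := h2
  refine ⟨w1.append w2, fun v hv => ?_⟩
  rcases (Walk.mem_support_append_iff _ _).mp hv with h | h
  · exact hw1 v h
  · exact hw2 v h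

lemma reachIn_of_induce_reachable {A : Set V} {a b : ↥A} (hr : (G.induce A).Reachable a b) :
    ReachIn G A a.val b.val := by
  obtain ⟨w⟩ := hr
  induction w with
  | nil => exact ⟨Walk.nil, by rintro v hv; simp at hv; subst hv; exact Subtype.coe_prop _⟩
  | @cons x c y h p ih =>
    obtain ⟨w', hw'⟩ := ih
    have hadj : G.Adj x.val c.val := h
    refine ⟨Walk.cons hadj w', fun v hv => ?_⟩
    rcases (by simpa [Walk.support_cons] using hv : v = x.val ∨ v ∈ w'.support) with rfl | hv'
    · exact x.2
    · exact hw' v hv'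

lemma reachable_induce_of_walk {A : Set V} :
    ∀ {x y : V} (w : G.Walk x y) (hw : ∀ v ∈ w.support, v ∈ A),
      (G.induce A).Reachable ⟨x, hw x w.start_mem_support⟩ ⟨y, hw y w.end_mem_support⟩ := by
  intro x y w
  induction w with
  | nil => intro hw; exact Reachable.refl _
  | @cons x c y h p ih =>
    intro hw
    have hc : c ∈ A := hw c (by simp [Walk.support_cons])
    have hx : x ∈ A := hw x (by simp [Walk.support_cons])
    have hadj : (G.induce A).Adj ⟨x, hx⟩ ⟨c, hc⟩ := h
    exact (hadj.reachable).trans (ih (fun v hv => hw v (by simp [Walk.support_cons, hv])))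

lemma reachIn_of_induce_connected {A : Set V} (hc : (G.induce A).Connected) {x y : V}
    (hx : x ∈ A) (hy : y ∈ A) : ReachIn G A x y :=
  reachIn_of_induce_reachable (hc.preconnected ⟨x, hx⟩ ⟨y, hy⟩)

lemma induce_connected_of_reachIn {A : Set V} (hne : A.Nonempty)
    (hr : ∀ x ∈ A, ∀ y ∈ A, ReachIn G A x y) : (G.induce A).Connected := by
  rw [connected_iff]
  refine ⟨?_, ⟨⟨hne.choose, hne.choose_spec⟩⟩⟩
  rintro ⟨x, hx⟩ ⟨y, hy⟩
  obtain ⟨w, hw⟩ := hr x hx y hy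
  exact reachable_induce_of_walk w hw


lemma edge_head {x y w : V} {p : G.Walk x y} (hp : p.IsPath) (he : s(x, w) ∈ p.edges) :
    w = p.getVert 1 := by
  induction p with
  | nil => simp at he
  | @cons x c y h q ih =>
    rw [Walk.edges_cons, List.mem_cons] at he
    rcases he with he | he
    · have : w = c := by
        rw [Sym2.eq_iff] at he
        rcases he with ⟨-, rfl⟩ | ⟨h1, rfl⟩
        · rfl
        · exact absurd h1 h.ne
      simp [this]
    · exfalso
      have hx : x ∈ q.support := q.fst_mem_support_of_mem_edges he
      exact ((Walk.cons_isPath_iff h q).mp hp).2 hx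

/-- every nonempty finite set in an acyclic graph contains a vertex with at most one
neighbour inside the set -/
lemma exists_leaf {n : ℕ} {H : SimpleGraph (Fin n)} (hac : H.IsAcyclic) (s : Finset (Fin n))
    (hs : s.Nonempty) :
    ∃ w ∈ s, ∀ a ∈ s, ∀ b ∈ s, H.Adj w a → H.Adj w b → a = b := by
  by_contra hcon
  push_neg at hcon
  have grow : ∀ m : ℕ, ∃ (x y : Fin n) (p : H.Walk x y),
      p.IsPath ∧ (∀ v ∈ p.support, v ∈ s) ∧ p.length = m := by
    intro m
    induction m with
    | zero =>
      obtain ⟨v, hv⟩ := hs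
      exact ⟨v, v, Walk.nil, Walk.IsPath.nil, by simpa using hv, rfl⟩
    | succ m ih =>
      obtain ⟨x, y, p, hp, hsup, hlen⟩ := ih
      have hy : y ∈ s := hsup y p.end_mem_support
      obtain ⟨a, ha, b, hb, hadja, hadjb, hab⟩ := hcon y hy
      -- pick a neighbour different from the penultimate vertex of p
      set pen := p.reverse.getVert 1 with hpen
      obtain ⟨u, hu, hadj, hupen⟩ : ∃ u ∈ s, H.Adj y u ∧ u ≠ pen := by
        by_cases hae : a = pen
        · exact ⟨b, hb, hadjb, fun hbe => hab (by rw [hae, hbe])⟩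
        · exact ⟨a, ha, hadja, hae⟩
      have hedge : s(y, u) ∉ p.edges := by
        intro he
        apply hupen
        rw [hpen]
        exact edge_head hp.reverse (by rwa [Walk.edges_reverse, List.mem_reverse])
      by_cases hmem : u ∈ p.support
      · exfalso
        have hq : (p.dropUntil u hmem).IsPath := hp.dropUntil hmem
        have hqe : s(y, u) ∉ (p.dropUntil u hmem).edges :=
          fun h => hedge (Walk.edges_dropUntil_subset _ _ h)
        have hcyc : (Walk.cons hadj (p.dropUntil u hmem)).IsCycle :=
          (Walk.cons_isCycle_iff _ hadj).mpr ⟨hq, hqe⟩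
        exact hac _ hcyc
      · refine ⟨x, u, (Walk.cons hadj.symm p.reverse).reverse, ?_, ?_, ?_⟩
        · rw [Walk.isPath_reverse_iff, Walk.cons_isPath_iff]
          exact ⟨hp.reverse, by rwa [Walk.support_reverse, List.mem_reverse]⟩
        · intro v hv
          rw [Walk.support_reverse, List.mem_reverse, Walk.support_cons, List.mem_cons] at hv
          rcases hv with rfl | hv
          · exact hu
          · exact hsup v (by rwa [Walk.support_reverse, List.mem_reverse] at hv)
        · rw [Walk.length_reverse, Walk.length_cons, Walk.length_reverse, hlen]
  obtain ⟨x, y, p, hp, hsup, hlen⟩ := grow s.card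
  have hsub : p.support.toFinset ⊆ s := fun v hv => hsup v (List.mem_toFinset.mp hv)
  have hcard := Finset.card_le_card hsub
  rw [List.toFinset_card_of_nodup hp.support_nodup, Walk.length_support, hlen] at hcard
  omega


/-- placement of a linear forest on the integer line, keeping a designated leaf on top -/
lemma place {n : ℕ} {H : SimpleGraph (Fin n)} (hH : H.IsLinearForest)
    (hleafex : ∀ (s : Finset (Fin n)), s.Nonempty →
      ∃ w ∈ s, ∀ a ∈ s, ∀ b ∈ s, H.Adj w a → H.Adj w b → a = b) :
    ∀ (m : ℕ) (s : Finset (Fin n)), s.card ≤ m → ∀ w ∈ s,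
      (∀ a ∈ s, ∀ b ∈ s, H.Adj w a → H.Adj w b → a = b) →
      ∃ f : Fin n → ℕ, Set.InjOn f ↑s ∧
        (∀ a ∈ s, ∀ b ∈ s, (H.Adj a b ↔ (f a = f b + 1 ∨ f b = f a + 1))) ∧
        (∀ a ∈ s, f a ≤ f w) ∧ (∀ a ∈ s, f a + 2 ≤ 2 * s.card) := by
  intro m
  induction m with
  | zero =>
    intro s hcard w hw _
    exact absurd (Finset.card_pos.mpr ⟨w, hw⟩) (by omega)
  | succ m ih =>
    intro s hcard w hw hleaf
    classical
    set s' := s.erase w with hs'def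
    have hcard' : s'.card + 1 = s.card := Finset.card_erase_add_one hw
    have hsplit : ∀ a ∈ s, a = w ∨ a ∈ s' := by
      intro a ha
      by_cases h : a = w
      · exact Or.inl h
      · exact Or.inr (Finset.mem_erase.mpr ⟨h, ha⟩)
    have hs'mem : ∀ a ∈ s', a ∈ s ∧ a ≠ w :=
      fun a ha => ⟨(Finset.mem_erase.mp ha).2, (Finset.mem_erase.mp ha).1⟩
    by_cases hs'ne : s'.Nonempty
    · by_cases hnb : ∃ u ∈ s, H.Adj w u
      · -- w has a (unique) neighbour u in s
        obtain ⟨u, hus, hadjwu⟩ := hnb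
        have hune : u ≠ w := fun e => H.irrefl (e ▸ hadjwu)
        have hus' : u ∈ s' := Finset.mem_erase.mpr ⟨hune, hus⟩
        have huleaf : ∀ a ∈ s', ∀ b ∈ s', H.Adj u a → H.Adj u b → a = b := by
          intro a ha b hb h1 h2
          rcases hH.2 u a b w h1 h2 hadjwu.symm with h | h | h
          · exact h
          · exact absurd h (hs'mem a ha).2
          · exact absurd h (hs'mem b hb).2
        obtain ⟨f', hinj, hiff, htop, hbound⟩ := ih s' (by omega) u hus' huleaf
        have hfs' : ∀ a ∈ s', Function.update f' w (f' u + 1) a = f' a :=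
          fun a ha => Function.update_of_ne (hs'mem a ha).2 _ _
        have hfw : Function.update f' w (f' u + 1) w = f' u + 1 := Function.update_self _ _ _
        refine ⟨Function.update f' w (f' u + 1), ?_, ?_, ?_, ?_⟩
        · -- InjOn
          intro a ha b hb he
          rcases hsplit a (Finset.mem_coe.mp ha) with rfl | ha' <;>
            rcases hsplit b (Finset.mem_coe.mp hb) with rfl | hb'
          · rfl
          · exfalso; rw [hfw, hfs' b hb'] at he; have := htop b hb'; omega
          · exfalso; rw [hfw, hfs' a ha'] at he; have := htop a ha'; omega
          · rw [hfs' a ha', hfs' b hb'] at he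
            exact hinj (Finset.mem_coe.mpr ha') (Finset.mem_coe.mpr hb') he
        · -- adjacency iff
          have key : ∀ a ∈ s', (H.Adj w a ↔
              (Function.update f' w (f' u + 1) w = Function.update f' w (f' u + 1) a + 1 ∨
               Function.update f' w (f' u + 1) a = Function.update f' w (f' u + 1) w + 1)) := by
            intro a ha
            rw [hfw, hfs' a ha]
            constructor
            · intro hwa
              have : a = u := hleaf a (hs'mem a ha).1 u hus hwa hadjwu
              subst this; left; rfl
            · rintro (h1 | h2)
              · have hfa : f' a = f' u := by omega
                have : a = u := hinj (Finset.mem_coe.mpr ha) (Finset.mem_coe.mpr hus') hfa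
                subst this; exact hadjwu
              · exfalso; have := htop a ha; omega
          intro a ha b hb
          rcases hsplit a ha with rfl | ha' <;> rcases hsplit b hb with rfl | hb'
          · exact ⟨fun hx => (H.irrefl hx).elim, fun hx => by omega⟩
          · exact key b hb'
          · rw [H.adj_comm, key a ha']; exact or_comm
          · rw [hfs' a ha', hfs' b hb']; exact hiff a ha' b hb'
        · -- top
          intro a ha
          rcases hsplit a ha with rfl | ha'
          · exact le_rfl
          · rw [hfs' a ha', hfw]; have := htop a ha'; omega
        · -- bound
          intro a ha
          rcases hsplit a ha with rfl | ha'
          · rw [hfw]; have := hbound u hus'; omega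
          · rw [hfs' a ha']; have := hbound a ha'; omega
      · -- w has no neighbour in s
        push_neg at hnb
        obtain ⟨u', hu's', hu'leaf⟩ := hleafex s' hs'ne
        obtain ⟨f', hinj, hiff, htop, hbound⟩ := ih s' (by omega) u' hu's' hu'leaf
        have hfs' : ∀ a ∈ s', Function.update f' w (f' u' + 2) a = f' a :=
          fun a ha => Function.update_of_ne (hs'mem a ha).2 _ _
        have hfw : Function.update f' w (f' u' + 2) w = f' u' + 2 := Function.update_self _ _ _
        refine ⟨Function.update f' w (f' u' + 2), ?_, ?_, ?_, ?_⟩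
        · intro a ha b hb he
          rcases hsplit a (Finset.mem_coe.mp ha) with rfl | ha' <;>
            rcases hsplit b (Finset.mem_coe.mp hb) with rfl | hb'
          · rfl
          · exfalso; rw [hfw, hfs' b hb'] at he; have := htop b hb'; omega
          · exfalso; rw [hfw, hfs' a ha'] at he; have := htop a ha'; omega
          · rw [hfs' a ha', hfs' b hb'] at he
            exact hinj (Finset.mem_coe.mpr ha') (Finset.mem_coe.mpr hb') he
        · have key : ∀ a ∈ s', (H.Adj w a ↔
              (Function.update f' w (f' u' + 2) w = Function.update f' w (f' u' + 2) a + 1 ∨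
               Function.update f' w (f' u' + 2) a = Function.update f' w (f' u' + 2) w + 1)) := by
            intro a ha
            rw [hfw, hfs' a ha]
            constructor
            · intro hwa; exact absurd hwa (hnb a (hs'mem a ha).1)
            · rintro (h1 | h2) <;> (exfalso; have := htop a ha; omega)
          intro a ha b hb
          rcases hsplit a ha with rfl | ha' <;> rcases hsplit b hb with rfl | hb'
          · exact ⟨fun hx => (H.irrefl hx).elim, fun hx => by omega⟩
          · exact key b hb'
          · rw [H.adj_comm, key a ha']; exact or_comm
          · rw [hfs' a ha', hfs' b hb']; exact hiff a ha' b hb'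
        · intro a ha
          rcases hsplit a ha with rfl | ha'
          · exact le_rfl
          · rw [hfs' a ha', hfw]; have := htop a ha'; omega
        · intro a ha
          rcases hsplit a ha with rfl | ha'
          · rw [hfw]; have := hbound u' hu's'; omega
          · rw [hfs' a ha']; have := hbound a ha'; omega
    · -- s = {w}
      have hse : s = {w} := by
        apply Finset.eq_singleton_iff_unique_mem.mpr
        refine ⟨hw, fun a ha => ?_⟩
        rcases hsplit a ha with rfl | ha'
        · rfl
        · exact absurd ⟨a, ha'⟩ hs'ne
      refine ⟨fun _ => 0, ?_, ?_, ?_, ?_⟩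
      · intro a ha b hb _
        rw [hse] at ha hb
        simp only [Finset.coe_singleton, Set.mem_singleton_iff] at ha hb
        rw [ha, hb]
      · intro a ha b hb
        rw [hse, Finset.mem_singleton] at ha hb
        subst ha; subst hb
        exact ⟨fun hx => (H.irrefl hx).elim, fun hx => by omega⟩
      · intro a _; exact le_rfl
      · intro a ha
        rw [hse] at ha ⊢
        simp

lemma shrink (G : SimpleGraph V) {h : ℕ} (hh : 1 ≤ h)
    (hNoIP : ∀ q : Fin (2 * h) → V, Function.Injective q →
      (∀ i j, G.Adj (q i) (q j) ↔ ((i : ℕ) = (j : ℕ) + 1 ∨ (j : ℕ) = (i : ℕ) + 1)) → False)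
    {D : Set V} (hD : (G.induce D).Connected) :
    ∀ (n : ℕ) (Z : Set V), Z.Finite → Z.Nonempty → Z ⊆ D → Z.ncard ≤ n →
      ∃ A : Set V, Z ⊆ A ∧ A ⊆ D ∧ A.Finite ∧ (G.induce A).Connected ∧
        A.ncard ≤ (2 * h - 1) * Z.ncard := by
  intro n
  induction n with
  | zero =>
    intro Z hf hne hsub hcard
    have := (Set.ncard_pos hf).mpr hne
    omega
  | succ n ih =>
    intro Z hf hne hsub hcard
    by_cases hsmall : Z.ncard ≤ n
    · exact ih Z hf hne hsub hsmall
    have hcardZ : Z.ncard = n + 1 := by omega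
    rcases Nat.eq_zero_or_pos n with rfl | hn
    · -- singleton case
      obtain ⟨z, rfl⟩ := Set.ncard_eq_one.mp hcardZ
      refine ⟨{z}, subset_rfl, hsub, Set.finite_singleton z, ?_, ?_⟩
      · apply induce_connected_of_reachIn (A := {z}) ⟨z, rfl⟩
        intro x hx y hy
        rw [Set.mem_singleton_iff] at hx hy
        subst hx; subst hy
        exact ⟨Walk.nil, by intro v hv; simp at hv; simp [hv]⟩
      · rw [Set.ncard_singleton]
        omega
    · obtain ⟨z, hz⟩ := hne
      classical
      set Z' := Z \ {z} with hZ'def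
      have hZ'card : Z'.ncard + 1 = Z.ncard := Set.ncard_diff_singleton_add_one hz hf
      have hZ'fin : Z'.Finite := hf.diff
      have hZ'ne : Z'.Nonempty := by
        rw [← Set.ncard_pos hZ'fin]; omega
      obtain ⟨A', hZ'A', hA'D, hA'fin, hA'conn, hA'card⟩ :=
        ih Z' hZ'fin hZ'ne (Set.diff_subset.trans hsub) (by omega)
      have hzD : z ∈ D := hsub hz
      obtain ⟨y0, hy0⟩ := hZ'ne
      have hy0A' : y0 ∈ A' := hZ'A' hy0
      have hreach : ReachIn G D z y0 := reachIn_of_induce_connected hD hzD (hA'D hy0A')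
      have hPne : ∃ m, ∃ y, y ∈ A' ∧ ∃ w : G.Walk z y,
          (∀ v ∈ w.support, v ∈ D) ∧ w.length = m := by
        obtain ⟨w0, hw0⟩ := hreach
        exact ⟨w0.length, y0, hy0A', w0, hw0, rfl⟩
      set m0 := Nat.find hPne with hm0def
      obtain ⟨y, hyA', w1, hw1sup, hw1len⟩ := Nat.find_spec hPne
      set w := w1.bypass with hwdef
      have hwsup : ∀ v ∈ w.support, v ∈ D := fun v hv => hw1sup v (w1.support_bypass_subset hv)
      have hwpath : w.IsPath := w1.bypass_isPath
      have hwlen : w.length = m0 :=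
        le_antisymm (by rw [hm0def, ← hw1len]; exact w1.length_bypass_le)
          (Nat.find_min' hPne ⟨y, hyA', w, hwsup, rfl⟩)
      have hmin : ∀ m, m < m0 → ¬ ∃ y, y ∈ A' ∧ ∃ w : G.Walk z y,
          (∀ v ∈ w.support, v ∈ D) ∧ w.length = m := fun m hm => Nat.find_min hPne hm
      -- the walk is short
      have hm0 : m0 < 2 * h := by
        by_contra hge
        push_neg at hge
        set q : Fin (2 * h) → V := fun i => w.getVert i with hqdef
        have hlt : ∀ i : Fin (2 * h), (i : ℕ) ≤ w.length := by
          intro i; have := i.isLt; omega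
        have key : ∀ i j : Fin (2 * h), (i : ℕ) < (j : ℕ) →
            (G.Adj (q i) (q j) ↔ (j : ℕ) = (i : ℕ) + 1) := by
          intro i j hij
          constructor
          · intro hadj
            by_contra hne
            have hij2 : (i : ℕ) + 1 < (j : ℕ) := by omega
            have hjlen : (j : ℕ) < w.length := by have := j.isLt; omega
            have hadj' : G.Adj (w.getVert i) (w.getVert j) := hadj
            refine hmin ((i : ℕ) + 1 + (w.length - (j : ℕ))) (by omega)
              ⟨y, hyA', ((takeW w i).concat hadj').append (dropW w j), ?_, ?_⟩
            · intro v hv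
              rcases (Walk.mem_support_append_iff _ _).mp hv with hv | hv
              · simp only [Walk.support_concat, List.concat_eq_append, List.mem_append,
                  List.mem_singleton] at hv
                rcases hv with hv | hv
                · exact hwsup v (support_takeW_subset w _ hv)
                · subst hv; exact hwsup _ (getVert_mem_support w _)
              · exact hwsup v (support_dropW_subset w _ hv)
            · rw [Walk.length_append, Walk.length_concat, length_takeW w (hlt i),
                length_dropW]
          · intro hj1
            have hilen : (i : ℕ) < w.length := by omega
            show G.Adj (w.getVert ↑i) (w.getVert ↑j)
            rw [show ((j : ℕ)) = (i : ℕ) + 1 from hj1]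
            exact w.adj_getVert_succ hilen
        apply hNoIP q
        · intro i j hij
          exact Fin.ext (getVert_injOn hwpath (hlt i) (hlt j) hij)
        · intro i j
          rcases lt_trichotomy (i : ℕ) (j : ℕ) with h1 | h1 | h1
          · rw [key i j h1]; omega
          · have : i = j := Fin.ext h1
            subst this
            exact ⟨fun hx => (G.irrefl hx).elim, fun hx => by omega⟩
          · rw [G.adj_comm, key j i h1]; omega
      -- build A
      set S : Set V := {v | v ∈ w.support} with hSdef
      have hyS : y ∈ S := w.end_mem_support
      have hzS : z ∈ S := w.start_mem_support
      have hSfin : S.Finite := w.support.finite_toSet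
      set A := A' ∪ S with hAdef
      have hAD : A ⊆ D := Set.union_subset hA'D (fun v hv => hwsup v hv)
      refine ⟨A, ?_, hAD, hA'fin.union hSfin, ?_, ?_⟩
      · intro x hx
        by_cases hxz : x = z
        · subst hxz; exact Or.inr hzS
        · exact Or.inl (hZ'A' ⟨hx, hxz⟩)
      · apply induce_connected_of_reachIn ⟨z, Or.inr hzS⟩
        have toy : ∀ x ∈ A, ReachIn G A x y := by
          intro x hx
          rcases hx with hx' | hxS
          · exact (reachIn_of_induce_connected hA'conn hx' hyA').mono Set.subset_union_left
          · exact ⟨w.dropUntil x hxS, fun v hv =>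
              Or.inr (w.support_dropUntil_subset hxS hv)⟩
        intro x hx x' hx'
        exact (toy x hx).trans (toy x' hx').symm
      · have hAeq : A = A' ∪ (S \ {y}) := by
          ext v
          constructor
          · rintro (hv | hv)
            · exact Or.inl hv
            · by_cases hvy : v = y
              · exact Or.inl (hvy ▸ hyA')
              · exact Or.inr ⟨hv, hvy⟩
          · rintro (hv | hv)
            · exact Or.inl hv
            · exact Or.inr hv.1
        have hAcard : A.ncard ≤ A'.ncard + (S \ {y}).ncard := by
          rw [hAeq]; exact Set.ncard_union_le _ _
        have hScard : S.ncard ≤ m0 + 1 := by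
          have hSeq : S = ↑w.support.toFinset := by ext v; simp [hSdef]
          rw [hSeq, Set.ncard_coe_finset]
          calc w.support.toFinset.card ≤ w.support.length := w.support.toFinset_card_le
            _ = m0 + 1 := by rw [Walk.length_support, hwlen]
        have hSd : (S \ {y}).ncard + 1 = S.ncard := Set.ncard_diff_singleton_add_one hyS hSfin
        have hZtot : Z.ncard = Z'.ncard + 1 := by omega
        calc A.ncard ≤ A'.ncard + (S \ {y}).ncard := hAcard
          _ ≤ (2 * h - 1) * Z'.ncard + (2 * h - 1) := Nat.add_le_add hA'card (by omega)
          _ = (2 * h - 1) * (Z'.ncard + 1) := by ring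
          _ = (2 * h - 1) * Z.ncard := by rw [hZtot]


lemma no_induced_path {h : ℕ} {H : SimpleGraph (Fin h)} (hH : H.IsLinearForest)
    {V : Type*} {G : SimpleGraph V} (hfree : ¬ Nonempty (H ↪g G)) (hh : 1 ≤ h) :
    ∀ q : Fin (2 * h) → V, Function.Injective q →
      (∀ i j, G.Adj (q i) (q j) ↔ ((i : ℕ) = (j : ℕ) + 1 ∨ (j : ℕ) = (i : ℕ) + 1)) → False := by
  intro q hq hqiff
  haveI : Nonempty (Fin h) := ⟨⟨0, hh⟩⟩
  obtain ⟨w, hw, hleaf⟩ := exists_leaf hH.1 Finset.univ Finset.univ_nonempty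
  obtain ⟨f, hinj, hiffH, -, hbound⟩ :=
    place hH (exists_leaf hH.1) Finset.univ.card Finset.univ le_rfl w hw hleaf
  have hlt : ∀ a, f a < 2 * h := by
    intro a
    have := hbound a (Finset.mem_univ a)
    rw [Finset.card_univ, Fintype.card_fin] at this
    omega
  apply hfree
  refine ⟨⟨⟨fun a => q ⟨f a, hlt a⟩, ?_⟩, ?_⟩⟩
  · intro a b hab
    have h1 : (⟨f a, hlt a⟩ : Fin (2 * h)) = ⟨f b, hlt b⟩ := hq hab
    have h2 : f a = f b := by simpa using h1
    exact hinj (by simp) (by simp) h2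
  · intro a b
    show G.Adj (q ⟨f a, hlt a⟩) (q ⟨f b, hlt b⟩) ↔ H.Adj a b
    rw [hqiff]
    dsimp only
    exact (hiffH a (Finset.mem_univ a) b (Finset.mem_univ b)).symm


end SmallSolAux

/-- if `G` is `H`-free for a linear forest `H` on `h` vertices and a solution
`D¹,…,Dᵏ` exists for the terminal sets `Z₁,…,Z_k`, then a solution `A¹,…,Aᵏ` exists with
`|Aⁱ| ≤ (2h-1)·|Zᵢ|` for every `i`. -/
theorem small_solution_exists {V : Type*} (h k : ℕ)
    (H : SimpleGraph (Fin h)) (hH : H.IsLinearForest)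
    (G : SimpleGraph V) (hHfree : ¬ Nonempty (H ↪g G))
    (Z : Fin k → Set V)
    (hZne : ∀ i, (Z i).Nonempty) (hZfin : ∀ i, (Z i).Finite)
    (hZdisj : ∀ i j, i ≠ j → Disjoint (Z i) (Z j))
    (hsol : ∃ D : Fin k → Set V,
      (∀ i j, i ≠ j → Disjoint (D i) (D j)) ∧
      (∀ i j, i ≠ j → G.Anticomplete (D i) (D j)) ∧
      (∀ i, (G.induce (D i)).Connected) ∧
      (∀ i, Z i ⊆ D i)) :
    ∃ A : Fin k → Set V,
      (∀ i j, i ≠ j → Disjoint (A i) (A j)) ∧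
      (∀ i j, i ≠ j → G.Anticomplete (A i) (A j)) ∧
      (∀ i, (G.induce (A i)).Connected) ∧
      (∀ i, Z i ⊆ A i) ∧
      (∀ i, (A i).Finite ∧ (A i).ncard ≤ (2 * h - 1) * (Z i).ncard) := by
  rcases Nat.eq_zero_or_pos h with rfl | hh
  · exact absurd ⟨⟨⟨Fin.elim0, fun a => a.elim0⟩, fun {a b} => a.elim0⟩⟩ hHfree
  obtain ⟨D, hDdisj, hDanti, hDconn, hZD⟩ := hsol
  have key := fun i => SmallSolAux.shrink G hh (SmallSolAux.no_induced_path hH hHfree hh) (hDconn i)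
    ((Z i).ncard) (Z i) (hZfin i) (hZne i) (hZD i) le_rfl
  choose A hZA hAD hAfin hAconn hAcard using key
  refine ⟨A, ?_, ?_, hAconn, hZA, fun i => ⟨hAfin i, hAcard i⟩⟩
  · intro i j hij
    exact (hDdisj i j hij).mono (hAD i) (hAD j)
  · intro i j hij a ha b hb
    exact hDanti i j hij a (hAD i ha) b (hAD j hb)
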